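/- Let R be a commutative ℚ-algebra and x, y ∈ R. In 𝒷ℰ(B_n) ⊗_ℚ R, the RSM-elements Θ_1^{B_n}(x,y), …, Θ_n^{B_n}(x,y) pairwise commute: Θ_i^{B_n}(x,y) Θ_j^{B_n}(x,y) = Θ_j^{B_n}(x,y) Θ_i^{B_n}(x,y) for all 1 ≤ i, j ≤ n. -/

import Mathlib

namespace Stmt15

/-- `i` is in the index range `{1, …, n}`. -/
def inR (n i : ℕ) : Prop := 1 ≤ i ∧ i ≤ n

/-- The defining relations (0)–(6) of the algebra `𝒷ℰ(B_n)` for elements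
`a i j = [i,j]`, `b i j = \overline{[i,j]}` (`1 ≤ i ≠ j ≤ n`) and `c i = [i]`
(`1 ≤ i ≤ n`) of an associative unital ring `A`. -/
structure BEBnRels (n : ℕ) {A : Type*} [Ring A]
    (a b : ℕ → ℕ → A) (c : ℕ → A) : Prop where
  r0a : ∀ i j, inR n i → inR n j → i ≠ j → a i j = -a j i
  r0b : ∀ i j, inR n i → inR n j → i ≠ j → b i j = b j i
  r1a : ∀ i j, inR n i → inR n j → i ≠ j → a i j * a i j = 0
  r1b : ∀ i j, inR n i → inR n j → i ≠ j → b i j * b i j = 0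
  r1c : ∀ i, inR n i → c i * c i = 0
  r2aa : ∀ i j k l, inR n i → inR n j → inR n k → inR n l →
      i ≠ j → k ≠ l → i ≠ k → i ≠ l → j ≠ k → j ≠ l →
      a i j * a k l = a k l * a i j
  r2ba : ∀ i j k l, inR n i → inR n j → inR n k → inR n l →
      i ≠ j → k ≠ l → i ≠ k → i ≠ l → j ≠ k → j ≠ l →
      b i j * a k l = a k l * b i j
  r2bb : ∀ i j k l, inR n i → inR n j → inR n k → inR n l →
      i ≠ j → k ≠ l → i ≠ k → i ≠ l → j ≠ k → j ≠ l →
      b i j * b k l = b k l * b i j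
  r3cc : ∀ i j, inR n i → inR n j → c i * c j = c j * c i
  r3ab : ∀ i j, inR n i → inR n j → i ≠ j → a i j * b i j = b i j * a i j
  r3ac : ∀ i j k, inR n i → inR n j → inR n k → i ≠ j → k ≠ i → k ≠ j →
      a i j * c k = c k * a i j
  r3bc : ∀ i j k, inR n i → inR n j → inR n k → i ≠ j → k ≠ i → k ≠ j →
      b i j * c k = c k * b i j
  r4a : ∀ i j k, inR n i → inR n j → inR n k → i ≠ j → j ≠ k → i ≠ k →
      a i j * a j k + a j k * a k i + a k i * a i j = 0
  r4b : ∀ i j k, inR n i → inR n j → inR n k → i ≠ j → j ≠ k → i ≠ k →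
      b i k * a i j + a j i * b j k + b k j * b i k = 0
  r4c : ∀ i j, inR n i → inR n j → i ≠ j →
      a i j * c i + c j * a j i + c i * b i j + b i j * c j = 0
  r5 : ∀ i j, 1 ≤ i → i < j → j ≤ n →
      a i j * c i * b i j * c i + b i j * c i * a i j * c i +
        c i * a i j * c i * b i j + c i * b i j * c i * a i j = 0
  r6 : ∀ i j, 1 ≤ i → i < j → j ≤ n →
      a i j * c i * b i j * c j = c j * b i j * c i * a i j

/-- The RSM-element `Θ_j^{B_n}(x,y)` in `𝒷ℰ(B_n) ⊗ R`:
`Θ_j = (h_{j-1,j}⁻¹ ⋯ h_{1,j}⁻¹) · h_j · (∏_{i ≠ j} g_{ij}, increasing i) · h_j ·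
(h_{j,n} ⋯ h_{j,j+1})`, where `h_{ij} = 1 + x•[i,j]`, `g_{ij} = 1 + x•\overline{[i,j]}`,
`h_j = 1 + y•[j]`, and `h_{ij}⁻¹ = h_{ji} = 1 + x•[j,i]`. -/
def ThetaB (n : ℕ) {R A : Type*} [CommRing R] [Ring A] [Algebra R A]
    (a b : ℕ → ℕ → A) (c : ℕ → A) (x y : R) (j : ℕ) : A :=
  ((List.range' 1 (j - 1)).reverse.map fun i => 1 + x • a j i).prod *
    (1 + y • c j) *
    (((List.range' 1 n).filter fun i => decide (i ≠ j)).map fun i => 1 + x • b i j).prod *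
    (1 + y • c j) *
    ((List.range' (j + 1) (n - j)).reverse.map fun k => 1 + x • a j k).prod

/-! ### Auxiliary development -/

/-- Unit-level consequences of the relations. -/
structure BUnits (n : ℕ) {M : Type*} [Ring M]
    (H G : ℕ → ℕ → M) (E : ℕ → M) : Prop where
  hinv : ∀ i j, inR n i → inR n j → i ≠ j → H i j * H j i = 1
  gsym : ∀ i j, inR n i → inR n j → i ≠ j → G i j = G j i
  y1 : ∀ i j k, inR n i → inR n j → inR n k → i ≠ j → i ≠ k → j ≠ k →
      H i j * (H i k * H j k) = (H j k * H i k) * H i j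
  y2 : ∀ i j k, inR n i → inR n j → inR n k → i ≠ j → i ≠ k → j ≠ k →
      H i j * (G i k * G j k) = (G j k * G i k) * H i j
  core : ∀ i j, inR n i → inR n j → i < j →
      H i j * (E i * G i j * E j) = (E j * G i j * E i) * H i j
  chh : ∀ i j k l, inR n i → inR n j → inR n k → inR n l → i ≠ j → k ≠ l →
      i ≠ k → i ≠ l → j ≠ k → j ≠ l → Commute (H i j) (H k l)
  chg : ∀ i j k l, inR n i → inR n j → inR n k → inR n l → i ≠ j → k ≠ l →
      i ≠ k → i ≠ l → j ≠ k → j ≠ l → Commute (H i j) (G k l)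
  cgg : ∀ i j k l, inR n i → inR n j → inR n k → inR n l → i ≠ j → k ≠ l →
      i ≠ k → i ≠ l → j ≠ k → j ≠ l → Commute (G i j) (G k l)
  che : ∀ i j k, inR n i → inR n j → inR n k → i ≠ j → k ≠ i → k ≠ j →
      Commute (H i j) (E k)
  cge : ∀ i j k, inR n i → inR n j → inR n k → i ≠ j → k ≠ i → k ≠ j →
      Commute (G i j) (E k)
  cee : ∀ i j, inR n i → inR n j → Commute (E i) (E j)

section ListLemmas
variable {M : Type*} [Monoid M]

theorem commute_list_prod (z : M) (l : List ℕ) (f : ℕ → M)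
    (h : ∀ k ∈ l, Commute z (f k)) : Commute z (l.map f).prod := by
  apply Commute.list_prod_right
  intro u hu
  obtain ⟨k, hk, rfl⟩ := List.mem_map.1 hu
  exact h k hk

theorem commute_prods (l1 l2 : List ℕ) (f g : ℕ → M)
    (h : ∀ k ∈ l1, ∀ k' ∈ l2, Commute (f k) (g k')) :
    Commute (l1.map f).prod (l2.map g).prod :=
  (commute_list_prod ((l2.map g).prod) l1 f
    (fun k hk => (commute_list_prod (f k) l2 g (h k hk)).symm)).symm

theorem pass_prod (z : M) (π π' : ℕ → M) (l : List ℕ)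
    (h : ∀ k ∈ l, z * π k = π' k * z) :
    z * (l.map π).prod = (l.map π').prod * z := by
  induction l with
  | nil => simp
  | cons m t ih =>
    simp only [List.map_cons, List.prod_cons]
    rw [← mul_assoc, h m (by simp), mul_assoc, ih (fun k hk => h k (by simp [hk])),
      ← mul_assoc]

theorem interleave (f g : ℕ → M) (l : List ℕ) (hnd : l.Nodup)
    (h : ∀ k ∈ l, ∀ k' ∈ l, k ≠ k' → Commute (g k) (f k')) :
    (l.map f).prod * (l.map g).prod = (l.map fun k => f k * g k).prod := by
  induction l with
  | nil => simp
  | cons m t ih =>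
    simp only [List.map_cons, List.prod_cons]
    obtain ⟨hm, hndt⟩ := List.nodup_cons.1 hnd
    have hc : Commute (g m) ((t.map f).prod) := by
      apply commute_list_prod
      intro k hk
      exact h m (by simp) k (by simp [hk]) (fun e => hm (e ▸ hk))
    calc f m * (t.map f).prod * (g m * (t.map g).prod)
        = f m * ((t.map f).prod * g m) * (t.map g).prod := by
          simp only [mul_assoc]
      _ = f m * (g m * (t.map f).prod) * (t.map g).prod := by rw [hc.eq]
      _ = (f m * g m) * ((t.map f).prod * (t.map g).prod) := by
          simp only [mul_assoc]
      _ = (f m * g m) * (t.map fun k => f k * g k).prod := by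
          rw [ih hndt (fun k hk k' hk' hne => h k (by simp [hk]) k' (by simp [hk']) hne)]

theorem bubble_right (h' g' : ℕ → M) (gv : M) :
    ∀ (l : List ℕ), l.Nodup →
    (∀ k ∈ l, h' k * (gv * g' k) = (g' k * gv) * h' k) →
    (∀ k ∈ l, ∀ k' ∈ l, k ≠ k' → Commute (h' k) (g' k')) →
    ∀ (W : M), (∀ k ∈ l, Commute (h' k) W) →
    (l.reverse.map h').prod * W * gv * (l.map g').prod
      = W * (l.map g').prod * gv * (l.reverse.map h').prod := by
  intro l
  induction l with
  | nil => intro _ _ _ W _; simp [mul_assoc]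
  | cons m t ih =>
    intro hnd hy hcgg W hcW
    obtain ⟨hm, hndt⟩ := List.nodup_cons.1 hnd
    simp only [List.reverse_cons, List.map_append, List.prod_append, List.map_cons,
      List.prod_cons, List.map_nil, List.prod_nil, mul_one]
    have hcm : Commute (h' m) ((t.map g').prod) := by
      apply commute_list_prod
      intro k hk
      exact hcgg m (by simp) k (by simp [hk]) (fun e => hm (e ▸ hk))
    calc (t.reverse.map h').prod * h' m * W * gv * (g' m * (t.map g').prod)
        = (t.reverse.map h').prod * (h' m * W) * gv * g' m * (t.map g').prod := by
          simp only [mul_assoc]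
      _ = (t.reverse.map h').prod * (W * h' m) * gv * g' m * (t.map g').prod := by
          rw [(hcW m (by simp)).eq]
      _ = (t.reverse.map h').prod * W * (h' m * (gv * g' m)) * (t.map g').prod := by
          simp only [mul_assoc]
      _ = (t.reverse.map h').prod * W * ((g' m * gv) * h' m) * (t.map g').prod := by
          rw [hy m (by simp)]
      _ = (t.reverse.map h').prod * (W * g' m) * gv * (h' m * (t.map g').prod) := by
          simp only [mul_assoc]
      _ = (t.reverse.map h').prod * (W * g' m) * gv * ((t.map g').prod * h' m) := by
          rw [hcm.eq]
      _ = ((t.reverse.map h').prod * (W * g' m) * gv * (t.map g').prod) * h' m := by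
          simp only [mul_assoc]
      _ = (W * g' m * (t.map g').prod * gv * (t.reverse.map h').prod) * h' m := by
          rw [ih hndt (fun k hk => hy k (by simp [hk]))
            (fun k hk k' hk' hne => hcgg k (by simp [hk]) k' (by simp [hk']) hne)
            (W * g' m)
            (fun k hk => ((hcW k (by simp [hk])).mul_right
              (hcgg k (by simp [hk]) m (by simp) (fun e => hm (e ▸ hk)))))]
      _ = W * (g' m * (t.map g').prod) * gv * ((t.reverse.map h').prod * h' m) := by
          simp only [mul_assoc]

theorem bubble_left (h' g' : ℕ → M) (gv : M) :
    ∀ (l : List ℕ), l.Nodup →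
    (∀ k ∈ l, h' k * (gv * g' k) = (g' k * gv) * h' k) →
    (∀ k ∈ l, ∀ k' ∈ l, k ≠ k' → Commute (h' k) (g' k')) →
    ∀ (W : M), (∀ k ∈ l, Commute (h' k) W) →
    (l.map g').prod * gv * W * (l.reverse.map h').prod
      = (l.reverse.map h').prod * gv * (l.map g').prod * W := by
  intro l
  induction l using List.reverseRecOn with
  | nil => intro _ _ _ W _; simp [mul_assoc]
  | append_singleton t m ih =>
    intro hnd hy hcgg W hcW
    have hm : m ∉ t := fun hmem =>
      (List.nodup_append.1 hnd).2.2 m hmem m (List.mem_singleton_self m) rfl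
    have hndt : t.Nodup := (List.nodup_append.1 hnd).1
    have memc : ∀ k ∈ t, k ≠ m := fun k hk e => hm (e ▸ hk)
    simp only [List.reverse_append, List.reverse_cons, List.reverse_nil,
      List.nil_append, List.map_append, List.prod_append, List.map_cons,
      List.prod_cons, List.map_nil, List.prod_nil, mul_one, List.singleton_append]
    have hcm : Commute (h' m) ((t.map g').prod) := by
      apply commute_list_prod
      intro k hk
      exact hcgg m (by simp) k (by simp [hk]) (fun e => (memc k hk) e.symm)
    calc (t.map g').prod * g' m * gv * W * (h' m * (t.reverse.map h').prod)
        = (t.map g').prod * g' m * gv * (W * h' m) * (t.reverse.map h').prod := by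
          simp only [mul_assoc]
      _ = (t.map g').prod * g' m * gv * (h' m * W) * (t.reverse.map h').prod := by
          rw [(hcW m (by simp)).eq]
      _ = (t.map g').prod * ((g' m * gv) * h' m) * W * (t.reverse.map h').prod := by
          simp only [mul_assoc]
      _ = (t.map g').prod * (h' m * (gv * g' m)) * W * (t.reverse.map h').prod := by
          rw [hy m (by simp)]
      _ = ((t.map g').prod * h' m) * gv * (g' m * W) * (t.reverse.map h').prod := by
          simp only [mul_assoc]
      _ = (h' m * (t.map g').prod) * gv * (g' m * W) * (t.reverse.map h').prod := by
          rw [← hcm.eq]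
      _ = h' m * ((t.map g').prod * gv * (g' m * W) * (t.reverse.map h').prod) := by
          simp only [mul_assoc]
      _ = h' m * ((t.reverse.map h').prod * gv * (t.map g').prod * (g' m * W)) := by
          rw [ih hndt (fun k hk => hy k (by simp [hk]))
            (fun k hk k' hk' hne => hcgg k (by simp [hk]) k' (by simp [hk']) hne)
            (g' m * W)
            (fun k hk => ((hcgg k (by simp [hk]) m (by simp) (memc k hk)).mul_right
              (hcW k (by simp [hk]))))]
      _ = (h' m * (t.reverse.map h').prod) * gv * ((t.map g').prod * g' m) * W := by
          simp only [mul_assoc]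

end ListLemmas

section Inst
variable {R M : Type*} [CommRing R] [Ring M] [Algebra R M]

theorem smul2 (s t : R) (p q : M) : (s • p) * (t • q) = (s*t) • (p * q) := by
  rw [smul_mul_assoc, mul_smul_comm, smul_smul]

theorem smul_comm_of (s t : R) {p q : M} (h : p * q = q * p) :
    (s • p) * (t • q) = (t • q) * (s • p) := by
  rw [smul2, smul2, h, mul_comm s t]

theorem one_add_mul_one_neg {u : M} (h : u * u = 0) : (1+u)*(1+(-u)) = 1 := by
  have e : (1+u)*(1+(-u)) = 1 - u*u := by noncomm_ring
  rw [e, h, sub_zero]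

theorem one_add_comm_of {u v : M} (h : u * v = v * u) :
    Commute (1 + u) (1 + v) := by
  show (1+u) * (1+v) = (1+v) * (1+u)
  linear_combination (norm := noncomm_ring) h

theorem y_abstract {P Q S : M} (hPP : P*P = 0) (h1 : P*S = S*Q + Q*P)
    (h2 : S*P = P*Q + Q*S) :
    (1+P)*((1+Q)*(1+S)) = ((1+S)*(1+Q))*(1+P) := by
  linear_combination (norm := noncomm_ring) h1 - h2 - P*h2 + h1*P - hPP*Q + Q*hPP

theorem core_abstract {Aa Bb D1 D2 : M} (hAA : Aa*Aa = 0) (hD1 : D1*D1 = 0)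
    (hAB : Aa*Bb = Bb*Aa) (hDD : D1*D2 = D2*D1)
    (h12 : Aa*D1 + D1*Bb + Bb*D2 = D2*Aa)
    (h21 : D1*Aa + D2*Bb + Bb*D1 = Aa*D2)
    (h6 : Aa*D1*Bb*D2 = D2*Bb*D1*Aa) :
    (1+Aa)*((1+D1)*(1+Bb)*(1+D2)) = ((1+D2)*(1+Bb)*(1+D1))*(1+Aa) := by
  linear_combination (norm := noncomm_ring) hDD + h12 - h21 + hAB + hDD*Aa + Aa*hDD
    + D1*h12 + Aa*h12 - h21*D1 - h21*Aa - hD1*Bb + Bb*hD1 + D1*hAA - hAA*D1 + h6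

variable {n : ℕ} {a b : ℕ → ℕ → M} {c : ℕ → M}

theorem units_of_rels (rels : BEBnRels n a b c) (x y : R) :
    BUnits n (fun k l => 1 + x • a k l) (fun k l => 1 + x • b k l)
      (fun k => 1 + y • c k) := by
  constructor
  · -- hinv
    intro i j hi hj hij
    have h0 : a i j * a i j = 0 := rels.r1a i j hi hj hij
    have hsym : a j i = -a i j := rels.r0a j i hj hi (Ne.symm hij)
    show (1 + x • a i j) * (1 + x • a j i) = 1
    rw [hsym, smul_neg]
    have hu : (x • a i j) * (x • a i j) = 0 := by
      rw [smul2, h0, smul_zero]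
    exact one_add_mul_one_neg hu
  · -- gsym
    intro i j hi hj hij
    show 1 + x • b i j = 1 + x • b j i
    rw [rels.r0b i j hi hj hij]
  · -- y1
    intro i j k hi hj hk hij hik hjk
    apply y_abstract
    · rw [smul2, rels.r1a i j hi hj hij, smul_zero]
    · -- (x•a i j)*(x•a j k) = (x•a j k)*(x•a i k) + (x•a i k)*(x•a i j)
      rw [smul2, smul2, smul2, ← smul_add]
      congr 1
      have h0 := rels.r4a i j k hi hj hk hij hjk hik
      have hki : a k i = -a i k := rels.r0a k i hk hi (Ne.symm hik)
      rw [hki] at h0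
      linear_combination (norm := noncomm_ring) h0
    · -- (x•a j k)*(x•a i j) = (x•a i j)*(x•a i k) + (x•a i k)*(x•a j k)
      rw [smul2, smul2, smul2, ← smul_add]
      congr 1
      have h0 := rels.r4a j i k hj hi hk (Ne.symm hij) hik hjk
      have hji : a j i = -a i j := rels.r0a j i hj hi (Ne.symm hij)
      have hkj : a k j = -a j k := rels.r0a k j hk hj (Ne.symm hjk)
      rw [hji, hkj] at h0
      linear_combination (norm := noncomm_ring) h0
  · -- y2
    intro i j k hi hj hk hij hik hjk
    apply y_abstract
    · rw [smul2, rels.r1a i j hi hj hij, smul_zero]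
    · -- (x•a i j)*(x•b j k) = (x•b j k)*(x•b i k) + (x•b i k)*(x•a i j)
      rw [smul2, smul2, smul2, ← smul_add]
      congr 1
      have h0 := rels.r4b i j k hi hj hk hij hjk hik
      have hji : a j i = -a i j := rels.r0a j i hj hi (Ne.symm hij)
      have hkj : b k j = b j k := rels.r0b k j hk hj (Ne.symm hjk)
      rw [hji, hkj] at h0
      linear_combination (norm := noncomm_ring) -h0
    · have h0 := rels.r4b j i k hj hi hk (Ne.symm hij) hik hjk
      have hji : a j i = -a i j := rels.r0a j i hj hi (Ne.symm hij)
      have hki : b k i = b i k := rels.r0b k i hk hi (Ne.symm hik)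
      rw [hji, hki] at h0
      rw [smul2, smul2, smul2, ← smul_add]
      congr 1
      linear_combination (norm := noncomm_ring) -h0
  · -- core
    intro i j hi hj hij
    have hne : i ≠ j := Nat.ne_of_lt hij
    apply core_abstract
    · rw [smul2, rels.r1a i j hi hj hne, smul_zero]
    · rw [smul2 y y, rels.r1c i hi, smul_zero]
    · exact smul_comm_of x x (rels.r3ab i j hi hj hne)
    · exact smul_comm_of y y (rels.r3cc i j hi hj)
    · -- A*D1 + D1*B + B*D2 = D2*A
      rw [smul2, smul2, smul2, smul2, mul_comm y x, ← smul_add, ← smul_add]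
      congr 1
      have h0 := rels.r4c i j hi hj hne
      have hji : a j i = -a i j := rels.r0a j i hj hi (Ne.symm hne)
      rw [hji] at h0
      linear_combination (norm := noncomm_ring) h0
    · rw [smul2, smul2, smul2, smul2, mul_comm y x, ← smul_add, ← smul_add]
      congr 1
      have h0 := rels.r4c j i hj hi (Ne.symm hne)
      have hji : a j i = -a i j := rels.r0a j i hj hi (Ne.symm hne)
      have hbji : b j i = b i j := rels.r0b j i hj hi (Ne.symm hne)
      rw [hji, hbji] at h0
      linear_combination (norm := noncomm_ring) h0
    · -- A*D1*B*D2 = D2*B*D1*A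
      rw [smul2, smul2, smul2, smul2, smul2, smul2]
      rw [show x*y*x*y = y*x*y*x by ring]
      congr 1
      exact rels.r6 i j hi.1 hij hj.2
  · intro i j k l hi hj hk hl hij hkl hik hil hjk hjl
    exact one_add_comm_of (smul_comm_of x x
      (rels.r2aa i j k l hi hj hk hl hij hkl hik hil hjk hjl))
  · intro i j k l hi hj hk hl hij hkl hik hil hjk hjl
    exact one_add_comm_of (smul_comm_of x x
      (rels.r2ba k l i j hk hl hi hj hkl hij (Ne.symm hik) (Ne.symm hjk)
        (Ne.symm hil) (Ne.symm hjl)).symm)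
  · intro i j k l hi hj hk hl hij hkl hik hil hjk hjl
    exact one_add_comm_of (smul_comm_of x x
      (rels.r2bb i j k l hi hj hk hl hij hkl hik hil hjk hjl))
  · intro i j k hi hj hk hij hki hkj
    exact one_add_comm_of (smul_comm_of x y (rels.r3ac i j k hi hj hk hij hki hkj))
  · intro i j k hi hj hk hij hki hkj
    exact one_add_comm_of (smul_comm_of x y (rels.r3bc i j k hi hj hk hij hki hkj))
  · intro i j hi hj
    exact one_add_comm_of (smul_comm_of y y (rels.r3cc i j hi hj))

end Inst

section MainProof
variable {M : Type*} [Ring M]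

/-- `ThetaB` expressed via abstract unit families. -/
def ThB (H G : ℕ → ℕ → M) (E : ℕ → M) (n m : ℕ) : M :=
  ((List.range' 1 (m - 1)).reverse.map fun k => H m k).prod * E m *
    (((List.range' 1 n).filter fun k => decide (k ≠ m)).map fun k => G k m).prod * E m *
    ((List.range' (m + 1) (n - m)).reverse.map fun k => H m k).prod

theorem filter_ne_of_not_mem (m : ℕ) (l : List ℕ) (h : ∀ k ∈ l, k ≠ m) :
    l.filter (fun k => decide (k ≠ m)) = l := by
  apply List.filter_eq_self.2
  intro k hk
  simpa using h k hk

theorem thetaB_commute {n : ℕ} {H G : ℕ → ℕ → M} {E : ℕ → M}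
    (U : BUnits n H G E) (i j : ℕ) (hi : inR n i) (hj : inR n j) (hlt : i < j) :
    ThB H G E n i * ThB H G E n j = ThB H G E n j * ThB H G E n i := by
  obtain ⟨h1i, hin⟩ := hi
  obtain ⟨h1j, hjn⟩ := hj
  have hne : i ≠ j := Nat.ne_of_lt hlt
  set s1 : List ℕ := List.range' 1 (i - 1) with hs1
  set s2 : List ℕ := List.range' (i + 1) (j - i - 1) with hs2
  set s3 : List ℕ := List.range' (j + 1) (n - j) with hs3
  -- membership facts
  have f1 : ∀ k ∈ s1, inR n k ∧ k ≠ i ∧ k ≠ j := by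
    intro k hk; rw [hs1] at hk; have := List.mem_range'_1.1 hk
    exact ⟨⟨by omega, by omega⟩, by omega, by omega⟩
  have f2 : ∀ k ∈ s2, inR n k ∧ k ≠ i ∧ k ≠ j := by
    intro k hk; rw [hs2] at hk; have := List.mem_range'_1.1 hk
    exact ⟨⟨by omega, by omega⟩, by omega, by omega⟩
  have f3 : ∀ k ∈ s3, inR n k ∧ k ≠ i ∧ k ≠ j := by
    intro k hk; rw [hs3] at hk; have := List.mem_range'_1.1 hk
    exact ⟨⟨by omega, by omega⟩, by omega, by omega⟩
  have g12 : ∀ k ∈ s1, ∀ k' ∈ s2, k ≠ k' := by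
    intro k hk k' hk'; rw [hs1] at hk; rw [hs2] at hk'
    have := List.mem_range'_1.1 hk; have := List.mem_range'_1.1 hk'; omega
  have g13 : ∀ k ∈ s1, ∀ k' ∈ s3, k ≠ k' := by
    intro k hk k' hk'; rw [hs1] at hk; rw [hs3] at hk'
    have := List.mem_range'_1.1 hk; have := List.mem_range'_1.1 hk'; omega
  have g23 : ∀ k ∈ s2, ∀ k' ∈ s3, k ≠ k' := by
    intro k hk k' hk'; rw [hs2] at hk; rw [hs3] at hk'
    have := List.mem_range'_1.1 hk; have := List.mem_range'_1.1 hk'; omega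
  have nd1 : s1.Nodup := by rw [hs1]; exact List.nodup_range' (s := 1) (n := i-1)
  have nd2 : s2.Nodup := by rw [hs2]; exact List.nodup_range' (s := i+1) (n := j-i-1)
  have nd3 : s3.Nodup := by rw [hs3]; exact List.nodup_range' (s := j+1) (n := n-j)
  have nd12 : (s1 ++ s2).Nodup :=
    nd1.append nd2 (List.disjoint_left.mpr fun a ha hb => g12 a ha a hb rfl)
  have nd23 : (s2 ++ s3).Nodup :=
    nd2.append nd3 (List.disjoint_left.mpr fun a ha hb => g23 a ha a hb rfl)
  have f12 : ∀ k ∈ s1 ++ s2, inR n k ∧ k ≠ i ∧ k ≠ j := by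
    intro k hk
    rcases List.mem_append.1 hk with h | h
    · exact f1 k h
    · exact f2 k h
  have f23 : ∀ k ∈ s2 ++ s3, inR n k ∧ k ≠ i ∧ k ≠ j := by
    intro k hk
    rcases List.mem_append.1 hk with h | h
    · exact f2 k h
    · exact f3 k h
  -- list splittings
  have hsplit2 : List.range' (i + 1) (n - i) = s2 ++ j :: s3 := by
    rw [hs2, hs3]
    have e4 : List.range' j (n - j + 1) = j :: List.range' (j + 1) (n - j) := by
      have := List.range'_succ (s := j) (n := n - j) (step := 1)
      simpa using this
    have e3 := List.range'_append (s := i+1) (m := j-i-1) (n := n-j+1) (step := 1)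
    simp only [one_mul, mul_one] at e3
    rw [show i+1 + (j-i-1) = j by omega] at e3
    rw [show j-i-1 + (n-j+1) = n - i by omega] at e3
    rw [← e3, e4]
  have hsplitj : List.range' 1 (j - 1) = s1 ++ i :: s2 := by
    rw [hs1, hs2]
    have e4 : List.range' i (j - i - 1 + 1) = i :: List.range' (i + 1) (j - i - 1) := by
      have := List.range'_succ (s := i) (n := j - i - 1) (step := 1)
      simpa using this
    have e3 := List.range'_append (s := 1) (m := i-1) (n := j-i-1+1) (step := 1)
    simp only [one_mul, mul_one] at e3
    rw [show 1 + (i-1) = i by omega] at e3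
    rw [show i-1 + (j-i-1+1) = j - 1 by omega] at e3
    rw [← e3, e4]
  have hfull : List.range' 1 n = s1 ++ i :: (s2 ++ j :: s3) := by
    have e4 : List.range' i (n - i + 1) = i :: List.range' (i + 1) (n - i) := by
      have := List.range'_succ (s := i) (n := n - i) (step := 1)
      simpa using this
    have e1 := List.range'_append (s := 1) (m := i-1) (n := n-i+1) (step := 1)
    simp only [one_mul, mul_one] at e1
    rw [show 1 + (i-1) = i by omega] at e1
    rw [show i-1 + (n-i+1) = n by omega] at e1
    rw [← e1, e4, hsplit2, hs1]
  have hfil_i : (List.range' 1 n).filter (fun k => decide (k ≠ i)) = s1 ++ (s2 ++ j :: s3) := by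
    rw [hfull, List.filter_append,
      filter_ne_of_not_mem i s1 (fun k hk => (f1 k hk).2.1),
      List.filter_cons_of_neg (by simp), List.filter_append,
      filter_ne_of_not_mem i s2 (fun k hk => (f2 k hk).2.1),
      List.filter_cons_of_pos (by simp [Ne.symm hne]),
      filter_ne_of_not_mem i s3 (fun k hk => (f3 k hk).2.1)]
  have hfil_j : (List.range' 1 n).filter (fun k => decide (k ≠ j)) = s1 ++ i :: (s2 ++ s3) := by
    rw [hfull, List.filter_append,
      filter_ne_of_not_mem j s1 (fun k hk => (f1 k hk).2.2),
      List.filter_cons_of_pos (by simp [hne]), List.filter_append,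
      filter_ne_of_not_mem j s2 (fun k hk => (f2 k hk).2.2),
      List.filter_cons_of_neg (by simp),
      filter_ne_of_not_mem j s3 (fun k hk => (f3 k hk).2.2)]
  -- theta decompositions
  have hthi : ThB H G E n i
      = ((s1.reverse).map fun k => H i k).prod * (E i *
        ((s1.map fun k => G k i).prod * ((s2.map fun k => G k i).prod * (G j i *
          (s3.map fun k => G k i).prod))) * (E i *
        (((s3.reverse).map fun k => H i k).prod * (H i j *
          ((s2.reverse).map fun k => H i k).prod)))) := by
    unfold ThB
    rw [hfil_i, hsplit2, ← hs1]
    simp only [List.reverse_append, List.reverse_cons, List.map_append, List.map_cons,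
      List.prod_append, List.prod_cons, List.map_nil, List.prod_nil, List.reverse_nil,
      List.nil_append, List.append_nil, List.singleton_append, mul_one, one_mul, mul_assoc]
  have hthj : ThB H G E n j
      = ((s2.reverse).map fun k => H j k).prod * (H j i *
        (((s1.reverse).map fun k => H j k).prod * (E j *
        ((s1.map fun k => G k j).prod * (G i j * ((s2.map fun k => G k j).prod *
          (s3.map fun k => G k j).prod))) * (E j *
        ((s3.reverse).map fun k => H j k).prod)))) := by
    unfold ThB
    rw [hfil_j, hsplitj, ← hs3]
    simp only [List.reverse_append, List.reverse_cons, List.map_append, List.map_cons,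
      List.prod_append, List.prod_cons, List.map_nil, List.prod_nil, List.reverse_nil,
      List.nil_append, List.append_nil, List.singleton_append, mul_one, one_mul, mul_assoc]
  -- atoms
  have inRi : inR n i := ⟨h1i, hin⟩
  have inRj : inR n j := ⟨h1j, hjn⟩
  set A1 := ((s1.reverse).map fun k => H i k).prod with hA1
  set A2 := ((s2.reverse).map fun k => H i k).prod with hA2
  set A3 := ((s3.reverse).map fun k => H i k).prod with hA3
  set B1 := ((s1.reverse).map fun k => H j k).prod with hB1
  set B2 := ((s2.reverse).map fun k => H j k).prod with hB2
  set B3 := ((s3.reverse).map fun k => H j k).prod with hB3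
  set Gi1 := (s1.map fun k => G k i).prod with hGi1
  set Gi2 := (s2.map fun k => G k i).prod with hGi2
  set Gi3 := (s3.map fun k => G k i).prod with hGi3
  set Gj1 := (s1.map fun k => G k j).prod with hGj1
  set Gj2 := (s2.map fun k => G k j).prod with hGj2
  set Gj3 := (s3.map fun k => G k j).prod with hGj3
  set K : List ℕ := (s1 ++ s2) ++ s3 with hK
  set W2 := ((s2.reverse).map fun k => H i k * H j k).prod with hW2
  set V1 := ((s1.reverse).map fun k => H j k * H i k).prod with hV1
  set V3 := ((s3.reverse).map fun k => H j k * H i k).prod with hV3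
  set Pi1 := (K.map fun k => G k i * G k j).prod with hPi1
  set Pi2 := (K.map fun k => G k j * G k i).prod with hPi2
  have fK : ∀ k ∈ K, inR n k ∧ k ≠ i ∧ k ≠ j := by
    intro k hk
    rcases List.mem_append.1 hk with h | h
    · exact f12 k h
    · exact f3 k h
  have gK12_3 : ∀ k ∈ s1 ++ s2, ∀ k' ∈ s3, k ≠ k' := by
    intro k hk k' hk'
    rcases List.mem_append.1 hk with h | h
    · exact g13 k h k' hk'
    · exact g23 k h k' hk'
  have ndK : K.Nodup :=
    nd12.append nd3 (List.disjoint_left.mpr fun a ha hb => gK12_3 a ha a hb rfl)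
  -- generic commute helper
  have qq : ∀ {X Y : M}, Commute X Y → ∀ t : M, X * (Y * t) = Y * (X * t) := by
    intro X Y h t
    rw [← mul_assoc, h.eq, mul_assoc]
  -- commute instances
  have cA3B2 : Commute A3 B2 := by
    apply commute_prods
    intro k hk k' hk'
    obtain ⟨hkR, hki, hkj⟩ := f3 k (List.mem_reverse.1 hk)
    obtain ⟨hk'R, hk'i, hk'j⟩ := f2 k' (List.mem_reverse.1 hk')
    exact U.chh i k j k' inRi hkR inRj hk'R (Ne.symm hki) (Ne.symm hk'j) hne
      (Ne.symm hk'i) hkj (Ne.symm (g23 k' (List.mem_reverse.1 hk') k (List.mem_reverse.1 hk)))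
  have cA2B1 : Commute A2 B1 := by
    apply commute_prods
    intro k hk k' hk'
    obtain ⟨hkR, hki, hkj⟩ := f2 k (List.mem_reverse.1 hk)
    obtain ⟨hk'R, hk'i, hk'j⟩ := f1 k' (List.mem_reverse.1 hk')
    exact U.chh i k j k' inRi hkR inRj hk'R (Ne.symm hki) (Ne.symm hk'j) hne
      (Ne.symm hk'i) hkj (Ne.symm (g12 k' (List.mem_reverse.1 hk') k (List.mem_reverse.1 hk)))
  have cA3B1 : Commute A3 B1 := by
    apply commute_prods
    intro k hk k' hk'
    obtain ⟨hkR, hki, hkj⟩ := f3 k (List.mem_reverse.1 hk)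
    obtain ⟨hk'R, hk'i, hk'j⟩ := f1 k' (List.mem_reverse.1 hk')
    exact U.chh i k j k' inRi hkR inRj hk'R (Ne.symm hki) (Ne.symm hk'j) hne
      (Ne.symm hk'i) hkj (Ne.symm (g13 k' (List.mem_reverse.1 hk') k (List.mem_reverse.1 hk)))
  have cB3A1 : Commute B3 A1 := by
    apply commute_prods
    intro k hk k' hk'
    obtain ⟨hkR, hki, hkj⟩ := f3 k (List.mem_reverse.1 hk)
    obtain ⟨hk'R, hk'i, hk'j⟩ := f1 k' (List.mem_reverse.1 hk')
    exact U.chh j k i k' inRj hkR inRi hk'R (Ne.symm hkj) (Ne.symm hk'i) (Ne.symm hne)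
      (Ne.symm hk'j) hki (Ne.symm (g13 k' (List.mem_reverse.1 hk') k (List.mem_reverse.1 hk)))
  have cB2A1 : Commute B2 A1 := by
    apply commute_prods
    intro k hk k' hk'
    obtain ⟨hkR, hki, hkj⟩ := f2 k (List.mem_reverse.1 hk)
    obtain ⟨hk'R, hk'i, hk'j⟩ := f1 k' (List.mem_reverse.1 hk')
    exact U.chh j k i k' inRj hkR inRi hk'R (Ne.symm hkj) (Ne.symm hk'i) (Ne.symm hne)
      (Ne.symm hk'j) hki (Ne.symm (g12 k' (List.mem_reverse.1 hk') k (List.mem_reverse.1 hk)))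
  have cB3A2 : Commute B3 A2 := by
    apply commute_prods
    intro k hk k' hk'
    obtain ⟨hkR, hki, hkj⟩ := f3 k (List.mem_reverse.1 hk)
    obtain ⟨hk'R, hk'i, hk'j⟩ := f2 k' (List.mem_reverse.1 hk')
    exact U.chh j k i k' inRj hkR inRi hk'R (Ne.symm hkj) (Ne.symm hk'i) (Ne.symm hne)
      (Ne.symm hk'j) hki (Ne.symm (g23 k' (List.mem_reverse.1 hk') k (List.mem_reverse.1 hk)))
  have cA3Ej : Commute A3 (E j) := by
    refine (commute_list_prod (E j) _ _ ?_).symm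
    intro k hk
    obtain ⟨hkR, hki, hkj⟩ := f3 k (List.mem_reverse.1 hk)
    exact (U.che i k j inRi hkR inRj (Ne.symm hki) (Ne.symm hne) (Ne.symm hkj)).symm
  have cA2Ej : Commute A2 (E j) := by
    refine (commute_list_prod (E j) _ _ ?_).symm
    intro k hk
    obtain ⟨hkR, hki, hkj⟩ := f2 k (List.mem_reverse.1 hk)
    exact (U.che i k j inRi hkR inRj (Ne.symm hki) (Ne.symm hne) (Ne.symm hkj)).symm
  have cEiB2 : Commute (E i) B2 := by
    apply commute_list_prod
    intro k hk
    obtain ⟨hkR, hki, hkj⟩ := f2 k (List.mem_reverse.1 hk)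
    exact (U.che j k i inRj hkR inRi (Ne.symm hkj) hne (Ne.symm hki)).symm
  have cEiB1 : Commute (E i) B1 := by
    apply commute_list_prod
    intro k hk
    obtain ⟨hkR, hki, hkj⟩ := f1 k (List.mem_reverse.1 hk)
    exact (U.che j k i inRj hkR inRi (Ne.symm hkj) hne (Ne.symm hki)).symm
  have cEjA1 : Commute (E j) A1 := by
    apply commute_list_prod
    intro k hk
    obtain ⟨hkR, hki, hkj⟩ := f1 k (List.mem_reverse.1 hk)
    exact (U.che i k j inRi hkR inRj (Ne.symm hki) (Ne.symm hne) (Ne.symm hkj)).symm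
  have cB3Ei : Commute B3 (E i) := by
    refine (commute_list_prod (E i) _ _ ?_).symm
    intro k hk
    obtain ⟨hkR, hki, hkj⟩ := f3 k (List.mem_reverse.1 hk)
    exact (U.che j k i inRj hkR inRi (Ne.symm hkj) hne (Ne.symm hki)).symm
  have cEiEj : Commute (E i) (E j) := U.cee i j inRi inRj
  have cEiGj1 : Commute (E i) Gj1 := by
    apply commute_list_prod
    intro k hk
    obtain ⟨hkR, hki, hkj⟩ := f1 k hk
    exact (U.cge k j i hkR inRj inRi hkj (Ne.symm hki) hne).symm
  have cEiGj2 : Commute (E i) Gj2 := by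
    apply commute_list_prod
    intro k hk
    obtain ⟨hkR, hki, hkj⟩ := f2 k hk
    exact (U.cge k j i hkR inRj inRi hkj (Ne.symm hki) hne).symm
  have cEiGj3 : Commute (E i) Gj3 := by
    apply commute_list_prod
    intro k hk
    obtain ⟨hkR, hki, hkj⟩ := f3 k hk
    exact (U.cge k j i hkR inRj inRi hkj (Ne.symm hki) hne).symm
  have cGi1Ej : Commute Gi1 (E j) := by
    refine (commute_list_prod (E j) _ _ ?_).symm
    intro k hk
    obtain ⟨hkR, hki, hkj⟩ := f1 k hk
    exact (U.cge k i j hkR inRi inRj hki (Ne.symm hkj) (Ne.symm hne)).symm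
  have cGi2Ej : Commute Gi2 (E j) := by
    refine (commute_list_prod (E j) _ _ ?_).symm
    intro k hk
    obtain ⟨hkR, hki, hkj⟩ := f2 k hk
    exact (U.cge k i j hkR inRi inRj hki (Ne.symm hkj) (Ne.symm hne)).symm
  have cGi3Ej : Commute Gi3 (E j) := by
    refine (commute_list_prod (E j) _ _ ?_).symm
    intro k hk
    obtain ⟨hkR, hki, hkj⟩ := f3 k hk
    exact (U.cge k i j hkR inRi inRj hki (Ne.symm hkj) (Ne.symm hne)).symm
  -- basic unit identities
  have hinv1 : H i j * H j i = 1 := U.hinv i j inRi inRj hne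
  have hinv2 : H j i * H i j = 1 := U.hinv j i inRj inRi (Ne.symm hne)
  have q3 : ∀ t : M, H i j * (H j i * t) = t := by
    intro t; rw [← mul_assoc, hinv1, one_mul]
  have q3' : ∀ t : M, H j i * (H i j * t) = t := by
    intro t; rw [← mul_assoc, hinv2, one_mul]
  have egsym : G j i = G i j := (U.gsym i j inRi inRj hne).symm
  -- interleave pieces
  have p_w2 : A2 * B2 = W2 := by
    apply interleave _ _ _ (List.nodup_reverse.2 nd2)
    intro k hk k' hk' hkk
    obtain ⟨hkR, hki, hkj⟩ := f2 k (List.mem_reverse.1 hk)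
    obtain ⟨hk'R, hk'i, hk'j⟩ := f2 k' (List.mem_reverse.1 hk')
    exact U.chh j k i k' inRj hkR inRi hk'R (Ne.symm hkj) (Ne.symm hk'i) (Ne.symm hne)
      (Ne.symm hk'j) hki hkk
  have p_w2' : H i j * W2 = (B2 * A2) * H i j := by
    have pp := pass_prod (H i j) (fun k => H i k * H j k) (fun k => H j k * H i k)
      s2.reverse (by
        intro k hk
        obtain ⟨hkR, hki, hkj⟩ := f2 k (List.mem_reverse.1 hk)
        exact U.y1 i j k inRi inRj hkR hne (Ne.symm hki) (Ne.symm hkj))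
    have palt : B2 * A2 = ((s2.reverse).map fun k => H j k * H i k).prod := by
      apply interleave _ _ _ (List.nodup_reverse.2 nd2)
      intro k hk k' hk' hkk
      obtain ⟨hkR, hki, hkj⟩ := f2 k (List.mem_reverse.1 hk)
      obtain ⟨hk'R, hk'i, hk'j⟩ := f2 k' (List.mem_reverse.1 hk')
      exact U.chh i k j k' inRi hkR inRj hk'R (Ne.symm hki) (Ne.symm hk'j) hne
        (Ne.symm hk'i) hkj hkk
    rw [← hW2] at pp
    rw [pp, ← palt]
  have p_v1 : B1 * A1 = V1 := by
    apply interleave _ _ _ (List.nodup_reverse.2 nd1)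
    intro k hk k' hk' hkk
    obtain ⟨hkR, hki, hkj⟩ := f1 k (List.mem_reverse.1 hk)
    obtain ⟨hk'R, hk'i, hk'j⟩ := f1 k' (List.mem_reverse.1 hk')
    exact U.chh i k j k' inRi hkR inRj hk'R (Ne.symm hki) (Ne.symm hk'j) hne
      (Ne.symm hk'i) hkj hkk
  have p_v1' : H j i * V1 = (A1 * B1) * H j i := by
    have pp := pass_prod (H j i) (fun k => H j k * H i k) (fun k => H i k * H j k)
      s1.reverse (by
        intro k hk
        obtain ⟨hkR, hki, hkj⟩ := f1 k (List.mem_reverse.1 hk)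
        exact U.y1 j i k inRj inRi hkR (Ne.symm hne) (Ne.symm hkj) (Ne.symm hki))
    have palt : A1 * B1 = ((s1.reverse).map fun k => H i k * H j k).prod := by
      apply interleave _ _ _ (List.nodup_reverse.2 nd1)
      intro k hk k' hk' hkk
      obtain ⟨hkR, hki, hkj⟩ := f1 k (List.mem_reverse.1 hk)
      obtain ⟨hk'R, hk'i, hk'j⟩ := f1 k' (List.mem_reverse.1 hk')
      exact U.chh j k i k' inRj hkR inRi hk'R (Ne.symm hkj) (Ne.symm hk'i) (Ne.symm hne)
        (Ne.symm hk'j) hki hkk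
    rw [← hV1] at pp
    rw [pp, ← palt]
  have p_v3 : B3 * A3 = V3 := by
    apply interleave _ _ _ (List.nodup_reverse.2 nd3)
    intro k hk k' hk' hkk
    obtain ⟨hkR, hki, hkj⟩ := f3 k (List.mem_reverse.1 hk)
    obtain ⟨hk'R, hk'i, hk'j⟩ := f3 k' (List.mem_reverse.1 hk')
    exact U.chh i k j k' inRi hkR inRj hk'R (Ne.symm hki) (Ne.symm hk'j) hne
      (Ne.symm hk'i) hkj hkk
  have p_v3' : H j i * V3 = (A3 * B3) * H j i := by
    have pp := pass_prod (H j i) (fun k => H j k * H i k) (fun k => H i k * H j k)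
      s3.reverse (by
        intro k hk
        obtain ⟨hkR, hki, hkj⟩ := f3 k (List.mem_reverse.1 hk)
        exact U.y1 j i k inRj inRi hkR (Ne.symm hne) (Ne.symm hkj) (Ne.symm hki))
    have palt : A3 * B3 = ((s3.reverse).map fun k => H i k * H j k).prod := by
      apply interleave _ _ _ (List.nodup_reverse.2 nd3)
      intro k hk k' hk' hkk
      obtain ⟨hkR, hki, hkj⟩ := f3 k (List.mem_reverse.1 hk)
      obtain ⟨hk'R, hk'i, hk'j⟩ := f3 k' (List.mem_reverse.1 hk')
      exact U.chh j k i k' inRj hkR inRi hk'R (Ne.symm hkj) (Ne.symm hk'i) (Ne.symm hne)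
        (Ne.symm hk'j) hki hkk
    rw [← hV3] at pp
    rw [pp, ← palt]
  -- bubble pieces
  have eA32 : ((s2 ++ s3).reverse.map fun k => H i k).prod = A3 * A2 := by
    rw [List.reverse_append, List.map_append, List.prod_append]
  have eB21 : ((s1 ++ s2).reverse.map fun k => H j k).prod = B2 * B1 := by
    rw [List.reverse_append, List.map_append, List.prod_append]
  have eG23j : ((s2 ++ s3).map fun k => G k j).prod = Gj2 * Gj3 := by
    rw [List.map_append, List.prod_append]
  have eG12i : ((s1 ++ s2).map fun k => G k i).prod = Gi1 * Gi2 := by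
    rw [List.map_append, List.prod_append]
  have hbr0 : A3 * A2 * Gj1 * G i j * (Gj2 * Gj3)
      = Gj1 * (Gj2 * Gj3) * G i j * (A3 * A2) := by
    have bb := bubble_right (fun k => H i k) (fun k => G k j) (G i j) (s2 ++ s3) nd23
      (by
        intro k hk
        obtain ⟨hkR, hki, hkj⟩ := f23 k hk
        exact U.y2 i k j inRi hkR inRj (Ne.symm hki) hne hkj)
      (by
        intro k hk k' hk' hkk
        obtain ⟨hkR, hki, hkj⟩ := f23 k hk
        obtain ⟨hk'R, hk'i, hk'j⟩ := f23 k' hk'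
        exact U.chg i k k' j inRi hkR hk'R inRj (Ne.symm hki) hk'j (Ne.symm hk'i) hne hkk hkj)
      Gj1
      (by
        intro k hk
        obtain ⟨hkR, hki, hkj⟩ := f23 k hk
        apply commute_list_prod
        intro k' hk'
        obtain ⟨hk'R, hk'i, hk'j⟩ := f1 k' hk'
        have hkk : k' ≠ k := by
          rcases List.mem_append.1 hk with h | h
          · exact g12 k' hk' k h
          · exact g13 k' hk' k h
        exact U.chg i k k' j inRi hkR hk'R inRj (Ne.symm hki) hk'j (Ne.symm hk'i) hne
          (Ne.symm hkk) hkj)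
    rw [eA32, eG23j] at bb
    exact bb
  have hbl0 : Gi1 * Gi2 * G j i * Gi3 * (B2 * B1)
      = B2 * B1 * G j i * (Gi1 * Gi2) * Gi3 := by
    have bb := bubble_left (fun k => H j k) (fun k => G k i) (G j i) (s1 ++ s2) nd12
      (by
        intro k hk
        obtain ⟨hkR, hki, hkj⟩ := f12 k hk
        exact U.y2 j k i inRj hkR inRi (Ne.symm hkj) (Ne.symm hne) hki)
      (by
        intro k hk k' hk' hkk
        obtain ⟨hkR, hki, hkj⟩ := f12 k hk
        obtain ⟨hk'R, hk'i, hk'j⟩ := f12 k' hk'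
        exact U.chg j k k' i inRj hkR hk'R inRi (Ne.symm hkj) hk'i (Ne.symm hk'j)
          (Ne.symm hne) hkk hki)
      Gi3
      (by
        intro k hk
        obtain ⟨hkR, hki, hkj⟩ := f12 k hk
        apply commute_list_prod
        intro k' hk'
        obtain ⟨hk'R, hk'i, hk'j⟩ := f3 k' hk'
        exact U.chg j k k' i inRj hkR hk'R inRi (Ne.symm hkj) hk'i (Ne.symm hk'j)
          (Ne.symm hne) (gK12_3 k hk k' hk') hki)
    rw [eB21, eG12i] at bb
    exact bb
  have hbl20 : Gj1 * G i j * (Gj2 * Gj3) * A1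
      = A1 * G i j * Gj1 * (Gj2 * Gj3) := by
    have bb := bubble_left (fun k => H i k) (fun k => G k j) (G i j) s1 nd1
      (by
        intro k hk
        obtain ⟨hkR, hki, hkj⟩ := f1 k hk
        exact U.y2 i k j inRi hkR inRj (Ne.symm hki) hne hkj)
      (by
        intro k hk k' hk' hkk
        obtain ⟨hkR, hki, hkj⟩ := f1 k hk
        obtain ⟨hk'R, hk'i, hk'j⟩ := f1 k' hk'
        exact U.chg i k k' j inRi hkR hk'R inRj (Ne.symm hki) hk'j (Ne.symm hk'i) hne hkk hkj)
      (Gj2 * Gj3)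
      (by
        intro k hk
        obtain ⟨hkR, hki, hkj⟩ := f1 k hk
        have c2 : Commute (H i k) Gj2 := by
          apply commute_list_prod
          intro k' hk'
          obtain ⟨hk'R, hk'i, hk'j⟩ := f2 k' hk'
          exact U.chg i k k' j inRi hkR hk'R inRj (Ne.symm hki) hk'j (Ne.symm hk'i) hne
            (g12 k hk k' hk') hkj
        have c3 : Commute (H i k) Gj3 := by
          apply commute_list_prod
          intro k' hk'
          obtain ⟨hk'R, hk'i, hk'j⟩ := f3 k' hk'
          exact U.chg i k k' j inRi hkR hk'R inRj (Ne.symm hki) hk'j (Ne.symm hk'i) hne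
            (g13 k hk k' hk') hkj
        exact c2.mul_right c3)
    exact bb
  have hbr20 : B3 * (Gi1 * Gi2) * G j i * Gi3
      = Gi1 * Gi2 * Gi3 * G j i * B3 := by
    have bb := bubble_right (fun k => H j k) (fun k => G k i) (G j i) s3 nd3
      (by
        intro k hk
        obtain ⟨hkR, hki, hkj⟩ := f3 k hk
        exact U.y2 j k i inRj hkR inRi (Ne.symm hkj) (Ne.symm hne) hki)
      (by
        intro k hk k' hk' hkk
        obtain ⟨hkR, hki, hkj⟩ := f3 k hk
        obtain ⟨hk'R, hk'i, hk'j⟩ := f3 k' hk'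
        exact U.chg j k k' i inRj hkR hk'R inRi (Ne.symm hkj) hk'i (Ne.symm hk'j)
          (Ne.symm hne) hkk hki)
      (Gi1 * Gi2)
      (by
        intro k hk
        obtain ⟨hkR, hki, hkj⟩ := f3 k hk
        have c1 : Commute (H j k) Gi1 := by
          apply commute_list_prod
          intro k' hk'
          obtain ⟨hk'R, hk'i, hk'j⟩ := f1 k' hk'
          exact U.chg j k k' i inRj hkR hk'R inRi (Ne.symm hkj) hk'i (Ne.symm hk'j)
            (Ne.symm hne) (Ne.symm (g13 k' hk' k hk)) hki
        have c2 : Commute (H j k) Gi2 := by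
          apply commute_list_prod
          intro k' hk'
          obtain ⟨hk'R, hk'i, hk'j⟩ := f2 k' hk'
          exact U.chg j k k' i inRj hkR hk'R inRi (Ne.symm hkj) hk'i (Ne.symm hk'j)
            (Ne.symm hne) (Ne.symm (g23 k' hk' k hk)) hki
        exact c1.mul_right c2)
    exact bb
  -- Pi pieces
  have eKi : (K.map fun k => G k i).prod = Gi1 * Gi2 * Gi3 := by
    rw [hK, List.map_append, List.prod_append, List.map_append, List.prod_append]
  have eKj : (K.map fun k => G k j).prod = Gj1 * Gj2 * Gj3 := by
    rw [hK, List.map_append, List.prod_append, List.map_append, List.prod_append]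
  have p_pi : Gi1 * Gi2 * Gi3 * (Gj1 * Gj2 * Gj3) = Pi1 := by
    rw [← eKi, ← eKj]
    apply interleave _ _ _ ndK
    intro k hk k' hk' hkk
    obtain ⟨hkR, hki, hkj⟩ := fK k hk
    obtain ⟨hk'R, hk'i, hk'j⟩ := fK k' hk'
    exact U.cgg k j k' i hkR inRj hk'R inRi hkj hk'i hkk hki (Ne.symm hk'j) (Ne.symm hne)
  have p_pi' : Gj1 * Gj2 * Gj3 * (Gi1 * Gi2 * Gi3) = Pi2 := by
    rw [← eKi, ← eKj]
    apply interleave _ _ _ ndK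
    intro k hk k' hk' hkk
    obtain ⟨hkR, hki, hkj⟩ := fK k hk
    obtain ⟨hk'R, hk'i, hk'j⟩ := fK k' hk'
    exact U.cgg k i k' j hkR inRi hk'R inRj hki hk'j hkk hkj (Ne.symm hk'i) hne
  have hpass_pi : H i j * Pi1 = Pi2 * H i j := by
    apply pass_prod
    intro k hk
    obtain ⟨hkR, hki, hkj⟩ := fK k hk
    have e1 : G i k = G k i := U.gsym i k inRi hkR (Ne.symm hki)
    have e2 : G j k = G k j := U.gsym j k inRj hkR (Ne.symm hkj)
    have := U.y2 i j k inRi inRj hkR hne (Ne.symm hki) (Ne.symm hkj)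
    rw [e1, e2] at this
    exact this
  have q_core : ∀ t : M, H i j * (E i * (G i j * (E j * t)))
      = E j * (G i j * (E i * (H i j * t))) := by
    intro t
    simpa only [mul_assoc] using congrArg (· * t) (U.core i j inRi inRj hlt)
  -- context versions
  have q1 : ∀ t : M, A2 * (B2 * t) = W2 * t := by
    intro t; rw [← mul_assoc, p_w2]
  have q2 : ∀ t : M, H i j * (W2 * t) = B2 * (A2 * (H i j * t)) := by
    intro t
    simpa only [mul_assoc] using congrArg (· * t) p_w2'
  have qv1 : ∀ t : M, B1 * (A1 * t) = V1 * t := by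
    intro t; rw [← mul_assoc, p_v1]
  have qv1' : ∀ t : M, H j i * (V1 * t) = A1 * (B1 * (H j i * t)) := by
    intro t
    simpa only [mul_assoc] using congrArg (· * t) p_v1'
  have qv3 : ∀ t : M, B3 * (A3 * t) = V3 * t := by
    intro t; rw [← mul_assoc, p_v3]
  have qv3' : ∀ t : M, H j i * (V3 * t) = A3 * (B3 * (H j i * t)) := by
    intro t
    simpa only [mul_assoc] using congrArg (· * t) p_v3'
  have q9 : ∀ t : M, A3 * (A2 * (Gj1 * (G i j * (Gj2 * (Gj3 * t)))))
      = Gj1 * (Gj2 * (Gj3 * (G i j * (A3 * (A2 * t))))) := by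
    intro t
    simpa only [mul_assoc] using congrArg (· * t) hbr0
  have q12 : ∀ t : M, Gi1 * (Gi2 * (G j i * (Gi3 * (B2 * (B1 * t)))))
      = B2 * (B1 * (G j i * (Gi1 * (Gi2 * (Gi3 * t))))) := by
    intro t
    simpa only [mul_assoc] using congrArg (· * t) hbl0
  have qr3 : ∀ t : M, Gj1 * (G i j * (Gj2 * (Gj3 * (A1 * t))))
      = A1 * (G i j * (Gj1 * (Gj2 * (Gj3 * t)))) := by
    intro t
    simpa only [mul_assoc] using congrArg (· * t) hbl20
  have qr5 : ∀ t : M, B3 * (Gi1 * (Gi2 * (G j i * (Gi3 * t))))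
      = Gi1 * (Gi2 * (Gi3 * (G j i * (B3 * t)))) := by
    intro t
    simpa only [mul_assoc] using congrArg (· * t) hbr20
  have q20 : ∀ t : M, Gi1 * (Gi2 * (Gi3 * (Gj1 * (Gj2 * (Gj3 * t))))) = Pi1 * t := by
    intro t
    simpa only [mul_assoc] using congrArg (· * t) p_pi
  have q20' : ∀ t : M, Gj1 * (Gj2 * (Gj3 * (Gi1 * (Gi2 * (Gi3 * t))))) = Pi2 * t := by
    intro t
    simpa only [mul_assoc] using congrArg (· * t) p_pi'
  have qpi : ∀ t : M, H i j * (Pi1 * t) = Pi2 * (H i j * t) := by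
    intro t
    simpa only [mul_assoc] using congrArg (· * t) hpass_pi
  -- conjugation of the core block
  have r15 : ∀ t : M, E j * (G i j * (E i * (Pi2 * (E j * (G i j * (E i * t))))))
      = H i j * (E i * (G i j * (E j * (Pi1 * (E i * (G i j * (E j * (H j i * t)))))))) := by
    intro t
    have : H i j * (E i * (G i j * (E j * (Pi1 * (E i * (G i j * (E j * (H j i * t))))))))
        = E j * (G i j * (E i * (Pi2 * (E j * (G i j * (E i * t)))))) := by
      rw [q_core, qpi, q_core, q3]
    exact this.symm
  -- L-id and R-id
  have r16 : ∀ t : M, B2 * (H j i * (B1 * (A1 * (H i j * t)))) = A1 * (B2 * (B1 * t)) := by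
    intro t
    rw [qv1, qv1', q3', qq cB2A1]
  have r17 : H j i * (B3 * (A3 * (H i j * A2))) = A3 * (A2 * B3) := by
    rw [qv3, qv3', q3', cB3A2.eq]
  -- final assembly
  rw [hthi, hthj]
  simp only [mul_assoc]
  conv_lhs => rw [q1, q2, q3, qq cA3B2, qq cA2B1, qq cA3B1, qq cA2Ej, qq cA3Ej, q9,
    qq cA2Ej, qq cA3Ej, qq cEiB2, qq cEiB1, q12, qq cEiB2, qq cEiB1, qq cEiEj,
    qq cEiGj1, qq cEiGj2, qq cEiGj3, qq cGi3Ej, qq cGi2Ej, qq cGi1Ej, q20, egsym]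
  conv_rhs => rw [qq cB3A1, qq cEjA1, qr3, qq cEjA1, qq cB3Ei, qr5, qq cB3Ei,
    qq cEiEj.symm, qq cEiGj3.symm, qq cEiGj2.symm, qq cEiGj1.symm,
    qq cGi1Ej.symm, qq cGi2Ej.symm, qq cGi3Ej.symm, q20', egsym, r15, r16, r17]

end MainProof

/-- in `𝒷ℰ(B_n) ⊗ R` the RSM-elements `Θ_1^{B_n}(x,y), …, Θ_n^{B_n}(x,y)`
pairwise commute. -/
theorem RSM_elements_commute_in_BE_Bn (n : ℕ) (hn : 2 ≤ n)
    (R : Type*) [CommRing R] [Algebra ℚ R] (A : Type*) [Ring A] [Algebra R A]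
    (a b : ℕ → ℕ → A) (c : ℕ → A) (rels : BEBnRels n a b c) (x y : R) :
    ∀ i j, inR n i → inR n j →
      ThetaB n a b c x y i * ThetaB n a b c x y j =
        ThetaB n a b c x y j * ThetaB n a b c x y i := by
  have hth : ∀ m, ThetaB n a b c x y m
      = ThB (fun k l => 1 + x • a k l) (fun k l => 1 + x • b k l)
          (fun k => 1 + y • c k) n m := fun m => rfl
  intro i j hi hj
  rcases Nat.lt_trichotomy i j with hlt | heq | hgt
  · rw [hth, hth]
    exact thetaB_commute (units_of_rels rels x y) i j hi hj hlt
  · rw [heq]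
  · rw [hth, hth]
    exact (thetaB_commute (units_of_rels rels x y) j i hj hi hgt).symm

end Stmt15
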